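/- Let P be a poset and S an uncountable downward directed subset of P. Then S can be written as the union of a chain (under set inclusion) of downward directed subsets of S, each of cardinality strictly less than |S|. -/

import Mathlib

open Cardinal Set

namespace Stmt6Aux

variable {P : Type*} [PartialOrder P]

noncomputable def iter (f : P → P → P) (T : Set P) : ℕ → Set P
  | 0 => T
  | n+1 => iter f T n ∪ Set.image2 f (iter f T n) (iter f T n)

noncomputable def clos (f : P → P → P) (T : Set P) : Set P := ⋃ n, iter f T n

theorem iter_mono (f : P → P → P) (T : Set P) : Monotone (iter f T) := by
  apply monotone_nat_of_le_succ
  intro n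
  exact Set.subset_union_left

theorem subset_clos (f : P → P → P) (T : Set P) : T ⊆ clos f T :=
  Set.subset_iUnion (iter f T) 0

theorem clos_subset {f : P → P → P} {S T : Set P}
    (hT : T ⊆ S) (hf : ∀ p ∈ S, ∀ q ∈ S, f p q ∈ S) : clos f T ⊆ S := by
  apply Set.iUnion_subset
  intro n
  induction n with
  | zero => exact hT
  | succ n ih =>
    rintro x (hx | hx)
    · exact ih hx
    · obtain ⟨a, ha, b, hb, rfl⟩ := hx
      exact hf a (ih ha) b (ih hb)

theorem clos_directed {f : P → P → P} (T : Set P) :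
    ∀ p ∈ clos f T, ∀ q ∈ clos f T, f p q ∈ clos f T := by
  intro p hp q hq
  obtain ⟨_, ⟨n, rfl⟩, hpn⟩ := hp
  obtain ⟨_, ⟨m, rfl⟩, hqm⟩ := hq
  refine Set.mem_iUnion.2 ⟨max n m + 1, Or.inr ?_⟩
  exact Set.mem_image2_of_mem (iter_mono f T (le_max_left n m) hpn)
    (iter_mono f T (le_max_right n m) hqm)

theorem mk_iter_le (f : P → P → P) (T : Set P) (n : ℕ) :
    #(iter f T n) ≤ max #T ℵ₀ := by
  induction n with
  | zero => exact le_max_left _ _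
  | succ n ih =>
    have h1 : #(Set.image2 f (iter f T n) (iter f T n)) ≤ max #T ℵ₀ := by
      refine le_trans Cardinal.mk_image2_le ?_
      calc #(iter f T n) * #(iter f T n) ≤ max #T ℵ₀ * max #T ℵ₀ :=
            mul_le_mul' ih ih
        _ = max #T ℵ₀ := Cardinal.mul_eq_self (le_max_right _ _)
    calc #(iter f T (n+1)) ≤ #(iter f T n) + #(Set.image2 f (iter f T n) (iter f T n)) :=
          Cardinal.mk_union_le _ _
      _ ≤ max #T ℵ₀ + max #T ℵ₀ := add_le_add ih h1
      _ = max #T ℵ₀ := Cardinal.add_eq_self (le_max_right _ _)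

theorem mk_clos_le (f : P → P → P) (T : Set P) : #(clos f T) ≤ max #T ℵ₀ := by
  have h := Cardinal.mk_iUnion_le_lift (iter f T)
  simp only [Cardinal.lift_uzero, Cardinal.mk_nat, Cardinal.lift_aleph0] at h
  refine le_trans h ?_
  have hs : ⨆ n, #(iter f T n) ≤ max #T ℵ₀ := ciSup_le' (mk_iter_le f T)
  calc ℵ₀ * ⨆ n, #(iter f T n) ≤ max #T ℵ₀ * max #T ℵ₀ :=
        mul_le_mul' (le_max_right _ _) hs
    _ = max #T ℵ₀ := Cardinal.mul_eq_self (le_max_right _ _)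

end Stmt6Aux

open Stmt6Aux

theorem stmt_6 {P : Type*} [PartialOrder P]
    (S : Set P) (huncount : ¬ S.Countable)
    (hdir : ∀ p ∈ S, ∀ q ∈ S, ∃ r ∈ S, r ≤ p ∧ r ≤ q) :
    ∃ C : Set (Set P),
      IsChain (· ⊆ ·) C ∧
      (∀ A ∈ C, A ⊆ S ∧ A.Nonempty ∧
        (∀ p ∈ A, ∀ q ∈ A, ∃ r ∈ A, r ≤ p ∧ r ≤ q) ∧
        Cardinal.mk A < Cardinal.mk S) ∧
      ⋃₀ C = S := by
  classical
  have hκ : ℵ₀ < #S := by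
    rwa [← Cardinal.le_aleph0_iff_set_countable, not_le] at huncount
  -- choice of lower bounds
  set f : P → P → P := fun p q =>
    if h : p ∈ S ∧ q ∈ S then (hdir p h.1 q h.2).choose else p with hf
  have hfS : ∀ p ∈ S, ∀ q ∈ S, f p q ∈ S := by
    intro p hp q hq
    simp only [hf]
    rw [dif_pos (show p ∈ S ∧ q ∈ S from ⟨hp, hq⟩)]
    exact (hdir p hp q hq).choose_spec.1
  have hfle : ∀ p ∈ S, ∀ q ∈ S, f p q ≤ p ∧ f p q ≤ q := by
    intro p hp q hq
    simp only [hf]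
    rw [dif_pos (show p ∈ S ∧ q ∈ S from ⟨hp, hq⟩)]
    exact (hdir p hp q hq).choose_spec.2
  -- enumeration of S by the initial ordinal
  obtain ⟨e⟩ : Nonempty ((#S).ord.ToType ≃ S) := by
    rw [← Cardinal.eq, Cardinal.mk_ord_toType]
  set A : (#S).ord.ToType → Set P := fun i => clos f ((↑) '' (e '' Set.Iic i)) with hA
  have hAmono : ∀ i j, i ≤ j → A i ⊆ A j := by
    intro i j hij
    apply Set.iUnion_subset
    intro n
    induction n with
    | zero =>
      refine le_trans ?_ (subset_clos f _)
      exact Set.image_mono (Set.image_mono (Set.Iic_subset_Iic.2 hij))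
    | succ n ih =>
      rintro x (hx | hx)
      · exact ih hx
      · obtain ⟨a, ha, b, hb, rfl⟩ := hx
        exact clos_directed _ a (ih ha) b (ih hb)
  have hAsub : ∀ i, A i ⊆ S := by
    intro i
    refine clos_subset ?_ hfS
    rintro x ⟨y, _, rfl⟩
    exact y.2
  refine ⟨Set.range A, ?_, ?_, ?_⟩
  · rintro _ ⟨i, rfl⟩ _ ⟨j, rfl⟩ _
    rcases le_total i j with h | h
    · exact Or.inl (hAmono i j h)
    · exact Or.inr (hAmono j i h)
  · rintro _ ⟨i, rfl⟩
    refine ⟨hAsub i, ⟨(e i : P), subset_clos f _ ⟨e i, ⟨i, Set.self_mem_Iic, rfl⟩, rfl⟩⟩, ?_, ?_⟩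
    · intro p hp q hq
      have hp' := hAsub i hp
      have hq' := hAsub i hq
      exact ⟨f p q, clos_directed _ p hp q hq, hfle p hp' q hq'⟩
    · refine lt_of_le_of_lt (mk_clos_le f _) ?_
      have h1 : #((↑) '' (e '' Set.Iic i) : Set P) ≤ #(Set.Iic i) :=
        le_trans Cardinal.mk_image_le Cardinal.mk_image_le
      have h2 : #(Set.Iic i) < #S := by
        have : (Set.Iic i : Set (#S).ord.ToType) = Set.Iio i ∪ {i} := by
          ext x; simp [le_iff_lt_or_eq]
        rw [this]
        refine lt_of_le_of_lt (Cardinal.mk_union_le _ _) ?_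
        have hIio := Cardinal.mk_Iio_ord_toType i
        have : #({i} : Set (#S).ord.ToType) = 1 := Cardinal.mk_singleton i
        rw [this]
        exact Cardinal.add_lt_of_lt hκ.le hIio (lt_of_lt_of_le one_lt_aleph0 hκ.le)
      exact max_lt (lt_of_le_of_lt h1 h2) hκ
  · apply Set.eq_of_subset_of_subset
    · rw [Set.sUnion_range]
      exact Set.iUnion_subset hAsub
    · intro s hs
      refine Set.mem_sUnion.2 ⟨A (e.symm ⟨s, hs⟩), ⟨_, rfl⟩, ?_⟩
      refine subset_clos f _ ⟨e (e.symm ⟨s, hs⟩), ⟨_, Set.self_mem_Iic, rfl⟩, ?_⟩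
      simp
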